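/- Let n ≥ 1 and let P be a complex polynomial of degree n all of whose roots lie on the unit circle {z ∈ ℂ : |z| = 1}. Then 𝒟ₙ P is a polynomial of degree n and all roots of 𝒟ₙ P also lie on the unit circle. (Analogue of Rolle's theorem for polynomials with roots on the unit circle.) -/

import Mathlib

open Polynomial

lemma re_key (z a : ℂ) (ha : ‖a‖ = 1) (hz : z - a ≠ 0) :
    (z / (z - a)).re = 1/2 + (Complex.normSq z - 1) / (2 * Complex.normSq (z - a)) := by
  have h1 : Complex.normSq a = 1 := by
    rw [← Complex.sq_norm, ha]; norm_num
  have h2 : Complex.normSq (z - a) ≠ 0 := (Complex.normSq_pos.2 hz).ne'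
  have key : (z.re * (z - a).re + z.im * (z - a).im) * 2
      = Complex.normSq (z - a) + (Complex.normSq z - 1) := by
    simp only [Complex.normSq_apply, Complex.sub_re, Complex.sub_im] at *
    linear_combination -h1
  simp only [Complex.sub_re, Complex.sub_im] at key
  rw [Complex.div_re]
  field_simp
  simp only [Complex.sub_re, Complex.sub_im]
  linear_combination key

lemma key_sum (z : ℂ) (s : Multiset ℂ) (hs : ∀ a ∈ s, z - a ≠ 0) :
    z * ((s.map (fun a => X - C a)).prod.derivative.eval z)
      = (s.map (fun a => z / (z - a))).sum * ((s.map (fun a => X - C a)).prod.eval z) := by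
  induction s using Multiset.induction with
  | empty => simp
  | cons a t ih =>
    have ha : z - a ≠ 0 := hs a (Multiset.mem_cons_self a t)
    have ih' := ih (fun b hb => hs b (Multiset.mem_cons_of_mem hb))
    simp only [Multiset.map_cons, Multiset.prod_cons, Multiset.sum_cons,
      derivative_mul, derivative_sub, derivative_X, derivative_C, sub_zero,
      eval_add, eval_mul, eval_sub, eval_X, eval_C, eval_one, one_mul]
    have hrw : (z / (z - a) + (Multiset.map (fun a => z / (z - a)) t).sum)
        * ((z - a) * eval z (Multiset.map (fun a => X - C a) t).prod)
        = z * eval z (Multiset.map (fun a => X - C a) t).prod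
          + (Multiset.map (fun a => z / (z - a)) t).sum
            * ((z - a) * eval z (Multiset.map (fun a => X - C a) t).prod) := by
      field_simp
    rw [hrw]
    linear_combination (z - a) * ih'

/-- The differential operator `𝒟ₙ` acting on complex polynomials:
`(𝒟ₙ P)(z) = i·(z·P'(z) − (n/2)·P(z))`. -/
noncomputable def Dop (n : ℕ) (P : Polynomial ℂ) : Polynomial ℂ :=
  Polynomial.C Complex.I *
    (Polynomial.X * Polynomial.derivative P - Polynomial.C ((n : ℂ) / 2) * P)

theorem stmt1 (n : ℕ) (hn : 1 ≤ n) (P : Polynomial ℂ) (hdeg : P.natDegree = n)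
    (hroots : ∀ z : ℂ, P.eval z = 0 → ‖z‖ = 1) :
    (Dop n P).natDegree = n ∧ ∀ z : ℂ, (Dop n P).eval z = 0 → ‖z‖ = 1 := by
  have hP0 : P ≠ 0 := by
    intro h; rw [h, natDegree_zero] at hdeg; omega
  have hlc : P.leadingCoeff ≠ 0 := leadingCoeff_ne_zero.2 hP0
  obtain ⟨m, hm⟩ : ∃ m, n = m + 1 := ⟨n - 1, by omega⟩
  constructor
  · -- degree part
    have hcoeff : (Dop n P).coeff n = Complex.I * ((n : ℂ) / 2) * P.leadingCoeff := by
      have h1 : (X * derivative P).coeff n = (derivative P).coeff m := by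
        rw [hm, coeff_X_mul]
      have h2 : (derivative P).coeff m = P.coeff n * (m + 1 : ℕ) := by
        rw [coeff_derivative, hm]; push_cast; ring
      simp only [Dop, coeff_C_mul, coeff_sub, h1, h2]
      rw [← hdeg, coeff_natDegree]
      rw [hdeg]
      push_cast [hm]
      ring
    have hne : (Dop n P).coeff n ≠ 0 := by
      rw [hcoeff]
      exact mul_ne_zero (mul_ne_zero Complex.I_ne_zero
        (div_ne_zero (Nat.cast_ne_zero.2 (by omega)) two_ne_zero)) hlc
    have hub : (Dop n P).natDegree ≤ n := by
      apply le_trans (natDegree_C_mul_le _ _)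
      apply le_trans (natDegree_sub_le _ _)
      apply max_le
      · apply le_trans (natDegree_mul_le)
        have := natDegree_derivative_le P
        simp only [natDegree_X]
        omega
      · apply le_trans (natDegree_C_mul_le _ _) (le_of_eq hdeg)
    exact le_antisymm hub (le_natDegree_of_ne_zero hne)
  · -- roots part
    intro z hz
    by_cases hPz : P.eval z = 0
    · exact hroots z hPz
    have hsp : P.Splits := IsAlgClosed.splits P
    have hcard : P.roots.card = n := (splits_iff_card_roots.mp hsp).trans hdeg
    have hfac := (C_leadingCoeff_mul_prod_multiset_X_sub_C (splits_iff_card_roots.mp hsp)).symm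
    have hmem : ∀ a ∈ P.roots, ‖a‖ = 1 := fun a ha =>
      hroots a ((isRoot_of_mem_roots ha))
    have hzs : ∀ a ∈ P.roots, z - a ≠ 0 := by
      intro a ha h
      exact hPz (by rw [sub_eq_zero.mp h]; exact isRoot_of_mem_roots ha)
    set Q : Polynomial ℂ := (P.roots.map fun a => X - C a).prod with hQ
    set S : ℂ := (P.roots.map fun a => z / (z - a)).sum with hS
    have heval : P.eval z = P.leadingCoeff * Q.eval z := by
      conv_lhs => rw [hfac]
      simp
    have hEne : Q.eval z ≠ 0 := fun h => hPz (by rw [heval, h, mul_zero])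
    have hder : derivative P = C P.leadingCoeff * derivative Q := by
      conv_lhs => rw [hfac]
      rw [derivative_mul, derivative_C, zero_mul, zero_add]
    -- equation from hz
    have heq : z * (derivative P).eval z = ((n : ℂ) / 2) * P.eval z := by
      simp only [Dop, eval_mul, eval_C, eval_sub, eval_X, mul_eq_zero,
        Complex.I_ne_zero, false_or] at hz
      linear_combination hz
    rw [hder, heval, eval_mul, eval_C] at heq
    have heq2 : z * (derivative Q).eval z = ((n : ℂ) / 2) * Q.eval z := by
      apply mul_left_cancel₀ hlc
      linear_combination heq
    have hsum := key_sum z P.roots hzs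
    rw [← hQ, ← hS, heq2] at hsum
    have hSval : S = (n : ℂ) / 2 := (mul_right_cancel₀ hEne hsum).symm
    -- real parts
    have hre' : ((n : ℂ) / 2).re = (n : ℝ) / 2 := by
      rw [show ((n:ℂ)/2) = (((n/2 : ℝ)):ℂ) by push_cast; ring, Complex.ofReal_re]
    have h0 := congrArg Complex.re hSval
    have h1 : S.re = (Multiset.map (fun a => (z / (z - a)).re) P.roots).sum := by
      rw [hS]
      simpa [Multiset.map_map, Function.comp] using
        (map_multiset_sum Complex.reAddGroupHom
          (Multiset.map (fun a => z / (z - a)) P.roots))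
    have hSre : ((P.roots.map fun a => (z / (z - a)).re)).sum = (n : ℝ) / 2 := by
      rw [← h1, h0]; exact hre'
    have hre : ∀ a ∈ P.roots, (z / (z - a)).re
        = 1/2 + (Complex.normSq z - 1) / (2 * Complex.normSq (z - a)) :=
      fun a ha => re_key z a (hmem a ha) (hzs a ha)
    have hnemp : P.roots ≠ ∅ := by
      intro h
      rw [h] at hcard
      simp at hcard
      omega
    have hhalf : ((P.roots.map fun _ => (1:ℝ)/2)).sum = (n : ℝ) / 2 := by
      rw [Multiset.map_const', Multiset.sum_replicate, hcard, nsmul_eq_mul]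
      ring
    rcases lt_trichotomy (Complex.normSq z) 1 with h | h | h
    · exfalso
      have : ((P.roots.map fun a => (z / (z - a)).re)).sum
          < ((P.roots.map fun _ => (1:ℝ)/2)).sum := by
        apply Multiset.sum_lt_sum_of_nonempty hnemp
        intro a ha
        rw [hre a ha]
        have hd : 0 < 2 * Complex.normSq (z - a) := by
          have := Complex.normSq_pos.2 (hzs a ha); linarith
        have : (Complex.normSq z - 1) / (2 * Complex.normSq (z - a)) < 0 :=
          div_neg_of_neg_of_pos (by linarith) hd
        linarith
      rw [hSre, hhalf] at this; exact lt_irrefl _ this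
    · have := Complex.sq_norm z
      nlinarith [norm_nonneg z]
    · exfalso
      have : ((P.roots.map fun _ => (1:ℝ)/2)).sum
          < ((P.roots.map fun a => (z / (z - a)).re)).sum := by
        apply Multiset.sum_lt_sum_of_nonempty hnemp
        intro a ha
        rw [hre a ha]
        have hd : 0 < 2 * Complex.normSq (z - a) := by
          have := Complex.normSq_pos.2 (hzs a ha); linarith
        have : 0 < (Complex.normSq z - 1) / (2 * Complex.normSq (z - a)) :=
          div_pos (by linarith) hd
        linarith
      rw [hSre, hhalf] at this; exact lt_irrefl _ this
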